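/- Let p be prime, F ⊇ 𝔽_p a field, and k a nonnegative integer with base-p expansion k = k_0 + k_1 p + … + k_r p^r. Then the F-span of the monomials X^iY^{k−i} with binomial coefficient C(k,i) not divisible by p is a GL₂(F)-subrepresentation L_k of F[X,Y]_k, and its dimension over F equals ∏_{b=0}^{r} (k_b + 1). -/

import Mathlib

open Finset MvPolynomial

section aux

variable {p : ℕ}

private lemma aux_not_dvd_choose_small (hp : p.Prime) {r j : ℕ} (hr : r < p) (hj : j ≤ r) :
    ¬ p ∣ r.choose j := by
  intro h
  have hd : r.choose j ∣ r.factorial := by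
    refine Dvd.intro (j.factorial * (r - j).factorial) ?_
    rw [← mul_assoc, Nat.choose_mul_factorial_mul_factorial hj]
  exact absurd (hp.dvd_factorial.mp (h.trans hd)) (by omega)

private lemma aux_dvd_choose_iff (hp : p.Prime) (k i : ℕ) :
    p ∣ k.choose i ↔ p ∣ (k % p).choose (i % p) ∨ p ∣ (k / p).choose (i / p) := by
  haveI : Fact p.Prime := ⟨hp⟩
  have h := Choose.choose_modEq_choose_mod_mul_choose_div_nat (p := p) (n := k) (k := i)
  have : p ∣ k.choose i ↔ p ∣ (k % p).choose (i % p) * (k / p).choose (i / p) := by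
    constructor
    · intro hd
      exact (Nat.modEq_zero_iff_dvd).mp (h.symm.trans ((Nat.modEq_zero_iff_dvd).mpr hd))
    · intro hd
      exact (Nat.modEq_zero_iff_dvd).mp (h.trans ((Nat.modEq_zero_iff_dvd).mpr hd))
  rw [this, hp.dvd_mul]

private lemma aux_le_of_not_dvd_choose (hp : p.Prime) {a b : ℕ} (h : ¬ p ∣ a.choose b) :
    b ≤ a := by
  by_contra hab
  exact h (by rw [Nat.choose_eq_zero_of_lt (by omega)]; exact dvd_zero p)

private lemma aux_count (hp : p.Prime) (k : ℕ) :
    ((Finset.range (k + 1)).filter (fun i => ¬ p ∣ Nat.choose k i)).card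
      = ((Nat.digits p k).map (· + 1)).prod := by
  induction k using Nat.strong_induction_on with
  | _ k ih =>
  rcases Nat.eq_zero_or_pos k with rfl | hk
  · simp [Finset.range_one, Finset.filter_singleton, Nat.dvd_one, hp.ne_one]
  · have hp1 := hp.one_lt
    rw [Nat.digits_def' hp1 hk, List.map_cons, List.prod_cons,
      ← ih (k / p) (Nat.div_lt_self hk hp1),
      ← Finset.card_range (k % p + 1), ← Finset.card_product]
    refine Finset.card_bij' (fun i _ => (i % p, i / p)) (fun x _ => x.1 + p * x.2)
      ?_ ?_ ?_ ?_
    · intro i hi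
      simp only [Finset.mem_filter, Finset.mem_range] at hi
      have hd := hi.2
      rw [aux_dvd_choose_iff hp] at hd
      push_neg at hd
      have h1 : i % p ≤ k % p := aux_le_of_not_dvd_choose hp hd.1
      have h2 : i / p ≤ k / p := aux_le_of_not_dvd_choose hp hd.2
      simp only [Finset.mem_product, Finset.mem_range, Finset.mem_filter]
      exact ⟨by omega, by omega, hd.2⟩
    · rintro ⟨a, b⟩ hab
      simp only [Finset.mem_product, Finset.mem_range, Finset.mem_filter] at hab
      obtain ⟨ha, hb, hdb⟩ := hab
      have hap : a < p := by
        have h' := Nat.mod_lt k (show 0 < p by omega)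
        omega
      have hmod : (a + p * b) % p = a := by
        rw [Nat.add_mul_mod_self_left, Nat.mod_eq_of_lt hap]
      have hdiv : (a + p * b) / p = b := by
        rw [Nat.add_mul_div_left _ _ (show 0 < p by omega), Nat.div_eq_of_lt hap, Nat.zero_add]
      have hle : a + p * b ≤ k := by
        calc a + p * b ≤ k % p + p * (k / p) :=
              Nat.add_le_add (by omega) (Nat.mul_le_mul_left _ (by omega))
          _ = k := Nat.mod_add_div k p
      simp only [Finset.mem_filter, Finset.mem_range]
      refine ⟨by omega, ?_⟩
      rw [aux_dvd_choose_iff hp, hmod, hdiv]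
      push_neg
      exact ⟨aux_not_dvd_choose_small hp (Nat.mod_lt k (show 0 < p by omega)) (by omega), hdb⟩
    · intro i _; exact Nat.mod_add_div i p
    · rintro ⟨a, b⟩ hab
      simp only [Finset.mem_product, Finset.mem_range, Finset.mem_filter] at hab
      have hap : a < p := by
        have h' := Nat.mod_lt k (show 0 < p by omega)
        omega
      have hmod : (a + p * b) % p = a := by
        rw [Nat.add_mul_mod_self_left, Nat.mod_eq_of_lt hap]
      have hdiv : (a + p * b) / p = b := by
        rw [Nat.add_mul_div_left _ _ (show 0 < p by omega), Nat.div_eq_of_lt hap, Nat.zero_add]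
      simp [hmod, hdiv]

private lemma aux_trinom {k i s t : ℕ} (hik : i ≤ k) (hs : s ≤ i) (ht : t ≤ k - i) :
    k.choose i * (i.choose s * (k - i).choose t)
      = k.choose (s + t) * ((s + t).choose s * (k - (s + t)).choose (i - s)) := by
  have h1 := Nat.choose_mul_factorial_mul_factorial hs
  have h2 := Nat.choose_mul_factorial_mul_factorial ht
  have h3 := Nat.choose_mul_factorial_mul_factorial hik
  have hst : s + t ≤ k := by omega
  have h4 : (s + t).choose s * s.factorial * t.factorial = (s + t).factorial := by
    have := Nat.choose_mul_factorial_mul_factorial (Nat.le_add_right s t)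
    rwa [Nat.add_sub_cancel_left] at this
  have h5 : (k - (s + t)).choose (i - s) * (i - s).factorial * (k - i - t).factorial
      = (k - (s + t)).factorial := by
    have h := Nat.choose_mul_factorial_mul_factorial (show i - s ≤ k - (s + t) by omega)
    rwa [show k - (s + t) - (i - s) = k - i - t by omega] at h
  have h6 := Nat.choose_mul_factorial_mul_factorial hst
  set M := s.factorial * (i - s).factorial * (t.factorial * (k - i - t).factorial) with hM
  have hMpos : 0 < M := by positivity
  apply Nat.eq_of_mul_eq_mul_right hMpos
  have e1 : k.choose i * (i.choose s * (k - i).choose t) * M = k.factorial := by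
    rw [← h3, ← h1, ← h2, hM]; ring
  have e2 : k.choose (s + t) * ((s + t).choose s * (k - (s + t)).choose (i - s)) * M
      = k.factorial := by
    rw [← h6, ← h4, ← h5, hM]; ring
  rw [e1, e2]

private lemma aux_key (hp : p.Prime) {k i s t : ℕ} (hik : i ≤ k) (hs : s ≤ i) (ht : t ≤ k - i)
    (h1 : ¬ p ∣ k.choose i) (h2 : ¬ p ∣ i.choose s) (h3 : ¬ p ∣ (k - i).choose t) :
    ¬ p ∣ k.choose (s + t) := by
  intro h
  have hd : p ∣ k.choose i * (i.choose s * (k - i).choose t) := by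
    rw [aux_trinom hik hs ht]
    exact Dvd.dvd.mul_right h _
  rcases (hp.dvd_mul).mp hd with h' | h'
  · exact h1 h'
  · rcases (hp.dvd_mul).mp h' with h'' | h''
    · exact h2 h''
    · exact h3 h''

private lemma aux_expand {F : Type*} [CommRing F] (c d : F) (n : ℕ) :
    (c • (X 0 : MvPolynomial (Fin 2) F) + d • X 1) ^ n
      = ∑ s ∈ Finset.range (n + 1),
          (c ^ s * d ^ (n - s) * (n.choose s : F)) • (X 0 ^ s * X 1 ^ (n - s)) := by
  rw [add_pow]
  refine Finset.sum_congr rfl fun s hs => ?_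
  simp only [smul_pow, MvPolynomial.smul_eq_C_mul, map_mul, map_pow, map_natCast]
  ring

end aux

theorem stmt13 (p : ℕ) (hp : p.Prime) (F : Type*) [Field F] [CharP F p]
    (k : ℕ)
    (L : Submodule F (MvPolynomial (Fin 2) F))
    (hL : L = Submodule.span F
      {f | ∃ i ≤ k, ¬ (p ∣ Nat.choose k i) ∧
        f = MvPolynomial.X 0 ^ i * MvPolynomial.X 1 ^ (k - i)}) :
    (∀ g : Matrix (Fin 2) (Fin 2) F, IsUnit g.det → ∀ f ∈ L,
        MvPolynomial.aeval (fun v => ∑ w, g w v • MvPolynomial.X w) f ∈ L) ∧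
      Module.finrank F L = ((Nat.digits p k).map (· + 1)).prod := by
  subst hL
  set S : Set (MvPolynomial (Fin 2) F) :=
    {f | ∃ i ≤ k, ¬ (p ∣ Nat.choose k i) ∧
      f = MvPolynomial.X 0 ^ i * MvPolynomial.X 1 ^ (k - i)} with hS
  constructor
  · -- invariance
    intro g _ f hf
    set φ : Fin 2 → MvPolynomial (Fin 2) F := fun v => ∑ w, g w v • MvPolynomial.X w with hφ
    have hgen : ∀ f ∈ S, (MvPolynomial.aeval φ) f ∈ Submodule.span F S := by
      rintro _ ⟨i, hik, hdvd, rfl⟩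
      have hmap : (MvPolynomial.aeval φ) ((X 0 : MvPolynomial (Fin 2) F) ^ i * X 1 ^ (k - i))
          = (g 0 0 • (X 0 : MvPolynomial (Fin 2) F) + g 1 0 • X 1) ^ i
            * (g 0 1 • (X 0 : MvPolynomial (Fin 2) F) + g 1 1 • X 1) ^ (k - i) := by
        simp [hφ, Fin.sum_univ_two]
      rw [hmap, aux_expand, aux_expand, Finset.sum_mul_sum]
      apply Submodule.sum_mem
      intro s hs
      apply Submodule.sum_mem
      intro t ht
      simp only [Finset.mem_range] at hs ht
      have hs' : s ≤ i := by omega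
      have ht' : t ≤ k - i := by omega
      rw [smul_mul_smul_comm]
      have hmul : (X 0 ^ s * X 1 ^ (i - s)) * ((X 0 : MvPolynomial (Fin 2) F) ^ t * X 1 ^ (k - i - t))
          = X 0 ^ (s + t) * X 1 ^ (k - (s + t)) := by
        rw [mul_mul_mul_comm, ← pow_add, ← pow_add]
        congr 2
        omega
      rw [hmul]
      by_cases hc : p ∣ i.choose s * (k - i).choose t
      · have hzero : ((i.choose s : F)) * (((k - i).choose t : F)) = 0 := by
          rw [← Nat.cast_mul]
          exact (CharP.cast_eq_zero_iff F p _).mpr hc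
        have : (g 0 0 ^ s * g 1 0 ^ (i - s) * (i.choose s : F)) *
            (g 0 1 ^ t * g 1 1 ^ (k - i - t) * ((k - i).choose t : F))
            = (g 0 0 ^ s * g 1 0 ^ (i - s) * (g 0 1 ^ t * g 1 1 ^ (k - i - t))) *
              ((i.choose s : F) * ((k - i).choose t : F)) := by ring
        rw [this, hzero, mul_zero, zero_smul]
        exact Submodule.zero_mem _
      · rw [hp.dvd_mul] at hc
        push_neg at hc
        refine Submodule.smul_mem _ _ (Submodule.subset_span ?_)
        exact ⟨s + t, by omega, aux_key hp hik hs' ht' hdvd hc.1 hc.2, rfl⟩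
    have hle : (Submodule.span F S).map (MvPolynomial.aeval φ).toLinearMap
        ≤ Submodule.span F S := by
      rw [Submodule.map_span, Submodule.span_le]
      rintro _ ⟨x, hx, rfl⟩
      exact hgen x hx
    exact hle ⟨f, hf, rfl⟩
  · -- dimension
    set A : Finset ℕ := (Finset.range (k + 1)).filter (fun i => ¬ p ∣ Nat.choose k i) with hA
    set d : ↥A → (Fin 2 →₀ ℕ) :=
      fun i => Finsupp.single 0 (i : ℕ) + Finsupp.single 1 (k - (i : ℕ)) with hd
    have hdinj : Function.Injective d := by
      intro x y hxy
      have h0 := DFunLike.congr_fun hxy 0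
      simp [hd, Finsupp.single_apply] at h0
      exact h0
    set b : ↥A → MvPolynomial (Fin 2) F :=
      fun i => (MvPolynomial.basisMonomials (Fin 2) F) (d i) with hb
    have hli : LinearIndependent F b :=
      (MvPolynomial.basisMonomials (Fin 2) F).linearIndependent.comp d hdinj
    have hmono : ∀ i : ℕ, (X 0 : MvPolynomial (Fin 2) F) ^ i * X 1 ^ (k - i)
        = MvPolynomial.monomial (Finsupp.single 0 i + Finsupp.single 1 (k - i)) 1 := by
      intro i
      rw [MvPolynomial.X_pow_eq_monomial, MvPolynomial.X_pow_eq_monomial,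
        MvPolynomial.monomial_mul, one_mul]
    have hrange : Set.range b = S := by
      ext f
      constructor
      · rintro ⟨⟨i, hi⟩, rfl⟩
        simp only [hA, Finset.mem_filter, Finset.mem_range] at hi
        refine ⟨i, by omega, hi.2, ?_⟩
        simp [hb, hd, MvPolynomial.coe_basisMonomials, hmono]
      · rintro ⟨i, hik, hdvd, rfl⟩
        refine ⟨⟨i, ?_⟩, ?_⟩
        · simp only [hA, Finset.mem_filter, Finset.mem_range]
          exact ⟨by omega, hdvd⟩
        · simp [hb, hd, MvPolynomial.coe_basisMonomials, hmono]
    rw [← hrange, finrank_span_eq_card hli, Fintype.card_coe, hA, aux_count hp]
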